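/- Let L ≥ 2 be a natural number and, for 1 ≤ k ≤ L, let e_k denote the k-th standard basis vector of ℝ^L (coordinates indexed by the species 1, …, L). Then the ℝ-linear span of the set of vectors {e_c + e_d − e_a − e_b | 1 ≤ a, b, c, d ≤ L, a + b = c + d} ∪ {e_c + e_d − e_a | 1 ≤ a, c, d ≤ L, c + d = a} equals the hyperplane {x : Fin L → ℝ | ∑_{n=1}^{L} n · x_n = 0}; in particular this span has dimension L − 1. -/
import Mathlib


/-- The columns of the stoichiometric matrix of the complete 1-constituent
CCRN of length `L` and order two: the vectors `e_c + e_d − e_a − e_b` for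
reactions `ā + b̄ → c̄ + d̄` with `a + b = c + d`, together with the vectors
`e_c + e_d − e_a` for reactions `ā → c̄ + d̄` with `c + d = a`.  Species `n`
(for `1 ≤ n ≤ L`) is indexed by the element of `Fin L` with value `n − 1`. -/
def stoichVectors (L : ℕ) : Set (Fin L → ℝ) :=
  {w : Fin L → ℝ | ∃ a b c d : Fin L,
      ((a : ℕ) + 1) + ((b : ℕ) + 1) = ((c : ℕ) + 1) + ((d : ℕ) + 1) ∧
      w = Pi.single c 1 + Pi.single d 1 - Pi.single a 1 - Pi.single b 1} ∪
  {w : Fin L → ℝ | ∃ a c d : Fin L,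
      ((c : ℕ) + 1) + ((d : ℕ) + 1) = (a : ℕ) + 1 ∧
      w = Pi.single c 1 + Pi.single d 1 - Pi.single a 1}

/-- The conservation law `(1, 2, …, L)` as a linear functional. -/
noncomputable def consLaw (L : ℕ) : (Fin L → ℝ) →ₗ[ℝ] ℝ where
  toFun x := ∑ n : Fin L, ((n : ℕ) + 1 : ℝ) * x n
  map_add' x y := by simp [mul_add, Finset.sum_add_distrib]
  map_smul' c x := by
    simp only [Pi.smul_apply, smul_eq_mul, RingHom.id_apply, Finset.mul_sum]
    exact Finset.sum_congr rfl fun n _ => by ring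

lemma consLaw_apply (L : ℕ) (x : Fin L → ℝ) :
    consLaw L x = ∑ n : Fin L, ((n : ℕ) + 1 : ℝ) * x n := rfl

lemma consLaw_single (L : ℕ) (a : Fin L) :
    consLaw L (Pi.single a 1) = (a : ℕ) + 1 := by
  rw [consLaw_apply, Finset.sum_eq_single a]
  · simp
  · intro b _ hb; simp [Pi.single_apply, hb]
  · simp

lemma stoich_subset_ker (L : ℕ) :
    stoichVectors L ⊆ (LinearMap.ker (consLaw L) : Set (Fin L → ℝ)) := by
  rintro w (⟨a, b, c, d, h, rfl⟩ | ⟨a, c, d, h, rfl⟩)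
  · simp only [SetLike.mem_coe, LinearMap.mem_ker, map_add, map_sub, consLaw_single]
    have hcast : ((a : ℕ) : ℝ) + 1 + (((b : ℕ) : ℝ) + 1)
        = ((c : ℕ) : ℝ) + 1 + (((d : ℕ) : ℝ) + 1) := by exact_mod_cast h
    linarith
  · simp only [SetLike.mem_coe, LinearMap.mem_ker, map_add, map_sub, consLaw_single]
    have hcast : ((c : ℕ) : ℝ) + 1 + (((d : ℕ) : ℝ) + 1)
        = ((a : ℕ) : ℝ) + 1 := by exact_mod_cast h
    linarith

/-- The key unimolecular reaction vector `e_{k-1} + e_1 − e_{k+1}` (in species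
numbering: `e_k + e_1 − e_{k+1}`), abstractly. -/
lemma exists_u (L k : ℕ) (hk1 : 1 ≤ k) (hkL : k < L) :
    ∃ u : Fin L → ℝ, u ∈ stoichVectors L ∧ consLaw L u = 0 ∧
      u ⟨k, hkL⟩ = -1 ∧ ∀ j : Fin L, k < (j : ℕ) → u j = 0 := by
  have h0L : 0 < L := by omega
  have hk1L : k - 1 < L := by omega
  refine ⟨Pi.single (⟨k - 1, hk1L⟩ : Fin L) (1 : ℝ)
      + Pi.single (⟨0, h0L⟩ : Fin L) (1 : ℝ)
      - Pi.single (⟨k, hkL⟩ : Fin L) (1 : ℝ), ?_, ?_, ?_, ?_⟩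
  · refine Or.inr ⟨⟨k, hkL⟩, ⟨k - 1, hk1L⟩, ⟨0, h0L⟩, ?_, rfl⟩
    show (k - 1 + 1) + (0 + 1) = k + 1
    omega
  · simp only [map_add, map_sub, consLaw_single]
    show ((k - 1 : ℕ) : ℝ) + 1 + (((0 : ℕ) : ℝ) + 1) - (((k : ℕ) : ℝ) + 1) = 0
    rw [Nat.cast_sub hk1]
    push_cast
    ring
  · have e1 : (⟨k, hkL⟩ : Fin L) ≠ ⟨k - 1, hk1L⟩ := by
      simp only [ne_eq, Fin.mk.injEq]; omega
    have e2 : (⟨k, hkL⟩ : Fin L) ≠ ⟨0, h0L⟩ := by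
      simp only [ne_eq, Fin.mk.injEq]; omega
    simp [Pi.single_apply, e1, e2]
  · intro j hj
    have e1 : j ≠ ⟨k - 1, hk1L⟩ := by
      simp only [ne_eq, Fin.ext_iff]; omega
    have e2 : j ≠ ⟨0, h0L⟩ := by
      simp only [ne_eq, Fin.ext_iff]; omega
    have e3 : j ≠ ⟨k, hkL⟩ := by
      simp only [ne_eq, Fin.ext_iff]; omega
    simp [Pi.single_apply, e1, e2, e3]

lemma aux_span (L : ℕ) (hL : 2 ≤ L) (k : ℕ) :
    ∀ x : Fin L → ℝ, consLaw L x = 0 → (∀ j : Fin L, k ≤ (j : ℕ) → x j = 0) →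
      x ∈ Submodule.span ℝ (stoichVectors L) := by
  induction k with
  | zero =>
    intro x _ hx
    have : x = 0 := funext fun j => hx j (Nat.zero_le _)
    simp [this]
  | succ k ih =>
    intro x hfx hx
    by_cases hkL : L ≤ k
    · exact ih x hfx fun j hj => absurd j.isLt (by omega)
    have hkL' : k < L := lt_of_not_ge hkL
    rcases Nat.eq_zero_or_pos k with hk0 | hk1
    · subst hk0
      have h0 : x ⟨0, by omega⟩ = 0 := by
        rw [consLaw_apply, Finset.sum_eq_single (⟨0, by omega⟩ : Fin L)] at hfx
        · simpa using hfx
        · intro b _ hb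
          have hb1 : 1 ≤ (b : ℕ) := by
            rcases Nat.eq_zero_or_pos (b : ℕ) with h | h
            · exact absurd (Fin.ext h : b = ⟨0, by omega⟩) hb
            · exact h
          rw [hx b hb1]; ring
        · simp
      have : x = 0 := by
        funext j
        rcases Nat.eq_zero_or_pos (j : ℕ) with h | h
        · exact (Fin.ext h : j = ⟨0, by omega⟩) ▸ h0
        · exact hx j h
      simp [this]
    · obtain ⟨u, hu_mem, hu0, huk, hugt⟩ := exists_u L k hk1 hkL'
      have hy1 : consLaw L (x + x ⟨k, hkL'⟩ • u) = 0 := by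
        rw [map_add, map_smul, hfx, hu0, smul_zero, add_zero]
      have hy2 : ∀ j : Fin L, k ≤ (j : ℕ) → (x + x ⟨k, hkL'⟩ • u) j = 0 := by
        intro j hj
        rcases eq_or_lt_of_le hj with heq | hlt
        · have hji : j = ⟨k, hkL'⟩ := Fin.ext heq.symm
          subst hji
          simp only [Pi.add_apply, Pi.smul_apply, smul_eq_mul, huk]
          ring
        · have hxj : x j = 0 := hx j hlt
          simp only [Pi.add_apply, Pi.smul_apply, hugt j hlt, hxj, smul_zero, add_zero]
      have hy := ih _ hy1 hy2
      have hxy : x = (x + x ⟨k, hkL'⟩ • u) - x ⟨k, hkL'⟩ • u := by abel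
      rw [hxy]
      exact Submodule.sub_mem _ hy
        (Submodule.smul_mem _ _ (Submodule.subset_span hu_mem))

/-- Theorem: the stoichiometric subspace of the complete 1-constituent CCRN
of length `L ≥ 2` and order two is exactly the hyperplane orthogonal to the
conservation law `(1, 2, …, L)`; in particular it has dimension `L − 1`. -/
theorem stoichiometricSubspace_eq_hyperplane (L : ℕ) (hL : 2 ≤ L) :
    (Submodule.span ℝ (stoichVectors L) : Set (Fin L → ℝ))
        = {x : Fin L → ℝ | ∑ n : Fin L, ((n : ℕ) + 1 : ℝ) * x n = 0} ∧
      Module.finrank ℝ (Submodule.span ℝ (stoichVectors L)) = L - 1 := by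
  have heq : Submodule.span ℝ (stoichVectors L) = LinearMap.ker (consLaw L) := by
    apply le_antisymm
    · exact Submodule.span_le.2 (stoich_subset_ker L)
    · intro x hx
      exact aux_span L hL L x hx fun j hj => absurd j.isLt (by omega)
  constructor
  · rw [heq]
    ext x
    simp [LinearMap.mem_ker, consLaw_apply]
  · rw [heq]
    have hsurj : Function.Surjective (consLaw L) := by
      intro r
      refine ⟨Pi.single (⟨0, by omega⟩ : Fin L) r, ?_⟩
      rw [consLaw_apply, Finset.sum_eq_single (⟨0, by omega⟩ : Fin L)]
      · simp
      · intro b _ hb; simp [Pi.single_apply, hb]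
      · simp
    have hrange : LinearMap.range (consLaw L) = ⊤ := LinearMap.range_eq_top.2 hsurj
    have h2 := LinearMap.finrank_range_add_finrank_ker (consLaw L)
    rw [hrange, finrank_top] at h2
    simp only [Module.finrank_self] at h2
    have hpi : Module.finrank ℝ (Fin L → ℝ) = L := by simp
    rw [hpi] at h2
    omega
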